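/- Let $0 \le p_1 < q_1$ and $0 \le p_2 < q_2$ with $p_1 \ge p_2$ and $q_1 > q_2$. Define $h(x) = \frac{x^{p_1} - x^{q_1}}{x^{p_2} - x^{q_2}}$ for $x \in (0,1)$. Then $h$ is strictly increasing on $(0,1)$ and $h(x) \le \frac{q_1 - p_1}{q_2 - p_2}$ for all $x \in (0,1)$. -/

import Mathlib

open Set Real

/-- Secant inequality for exp at 0: `(e^u-1)/u < (e^v-1)/v` in cleared form. -/
lemma exp_secant_lt {u v : ℝ} (hu : 0 < u) (huv : u < v) :
    v * (Real.exp u - 1) < u * (Real.exp v - 1) := by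
  have h := strictConvexOn_exp.secant_strict_mono (a := 0) (x := u) (y := v)
    (mem_univ 0) (mem_univ u) (mem_univ v) hu.ne' (hu.trans huv).ne' huv
  simp only [Real.exp_zero, sub_zero] at h
  rw [div_lt_div_iff₀ hu (hu.trans huv)] at h
  linarith

/-- Secant inequality for exp on the left of 0. -/
lemma exp_secant_le {u v : ℝ} (hu : 0 < u) (huv : u ≤ v) :
    u * (1 - Real.exp (-v)) ≤ v * (1 - Real.exp (-u)) := by
  have hv : 0 < v := lt_of_lt_of_le hu huv
  have h := convexOn_exp.secant_mono (a := 0) (x := -v) (y := -u)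
    (mem_univ 0) (mem_univ _) (mem_univ _) (by linarith) (by linarith) (by linarith)
  simp only [Real.exp_zero, sub_zero] at h
  rw [div_neg, div_neg, neg_le_neg_iff, div_le_div_iff₀ hu hv] at h
  nlinarith [h]

/-- Key inequality in cleared-denominator form. -/
lemma key_ineq {a b c x : ℝ} (ha : 0 ≤ a) (hb : 0 < b) (hc : 0 < c) (habc : c < a + b)
    (hx : 0 < x) (hx1 : x < 1) :
    b * x ^ b * (1 - x ^ c) < a * (1 - x ^ b) * (1 - x ^ c) + c * x ^ c * (1 - x ^ b) := by
  set t : ℝ := -Real.log x with ht_def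
  have ht : 0 < t := by
    have := Real.log_neg hx hx1
    simp only [ht_def]; linarith
  have hxb : x ^ b = Real.exp (-(b * t)) := by
    rw [Real.rpow_def_of_pos hx]; congr 1; simp [ht_def]; ring
  have hxc : x ^ c = Real.exp (-(c * t)) := by
    rw [Real.rpow_def_of_pos hx]; congr 1; simp [ht_def]; ring
  rw [hxb, hxc]
  set X := Real.exp (-(b * t)) with hX_def
  set Y := Real.exp (-(c * t)) with hY_def
  have hX0 : 0 < X := Real.exp_pos _
  have hY0 : 0 < Y := Real.exp_pos _
  have hX1 : X < 1 := by
    rw [hX_def, Real.exp_lt_one_iff]; nlinarith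
  have hY1 : Y < 1 := by
    rw [hY_def, Real.exp_lt_one_iff]; nlinarith
  rcases le_or_gt b c with hbc | hbc
  · -- use exp_secant_le
    have h := exp_secant_le (u := b * t) (v := c * t) (by positivity)
      (by nlinarith)
    -- h : b*t*(1 - Y) ≤ c*t*(1 - X)
    have h' : b * (1 - Y) ≤ c * (1 - X) :=
      le_of_mul_le_mul_right (by nlinarith [h] : b * (1 - Y) * t ≤ c * (1 - X) * t) ht
    nlinarith [mul_pos (sub_pos.2 hX1) (sub_pos.2 hY1), h',
      mul_le_mul_of_nonneg_left (mul_pos (sub_pos.2 hX1) (sub_pos.2 hY1)).le ha]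
  · -- use exp_secant_lt
    have h := exp_secant_lt (u := c * t) (v := b * t) (by positivity)
      (by nlinarith)
    -- h : b*t*(exp(c*t) - 1) < c*t*(exp(b*t) - 1)
    have hXe : Real.exp (b * t) * X = 1 := by
      rw [hX_def, ← Real.exp_add]; simp
    have hYe : Real.exp (c * t) * Y = 1 := by
      rw [hY_def, ← Real.exp_add]; simp
    have h2 := mul_lt_mul_of_pos_right h (mul_pos hX0 hY0)
    have e1 : b * t * (Real.exp (c * t) - 1) * (X * Y) = (b * (X * (1 - Y))) * t := by
      linear_combination (b * t * X) * hYe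
    have e2 : c * t * (Real.exp (b * t) - 1) * (X * Y) = (c * (Y * (1 - X))) * t := by
      linear_combination (c * t * Y) * hXe
    rw [e1, e2] at h2
    have h3 : b * (X * (1 - Y)) < c * (Y * (1 - X)) := lt_of_mul_lt_mul_right h2 ht.le
    have h4 : 0 ≤ a * (1 - X) * (1 - Y) :=
      mul_nonneg (mul_nonneg ha (by linarith)) (by linarith)
    nlinarith [h3, h4]

lemma L_hasDerivAt (a b c : ℝ) {x : ℝ} (hb : 0 < b) (hc : 0 < c) (hx : 0 < x) (hx1 : x < 1) :
    HasDerivAt (fun y : ℝ => a * Real.log y + Real.log (1 - y ^ b) - Real.log (1 - y ^ c))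
      (a * x⁻¹ + -(b * x ^ (b - 1)) / (1 - x ^ b) - -(c * x ^ (c - 1)) / (1 - x ^ c)) x := by
  have hxb1 : x ^ b < 1 := Real.rpow_lt_one hx.le hx1 hb
  have hxc1 : x ^ c < 1 := Real.rpow_lt_one hx.le hx1 hc
  have h1 : HasDerivAt (fun y : ℝ => a * Real.log y) (a * x⁻¹) x :=
    (Real.hasDerivAt_log hx.ne').const_mul a
  have h2 : HasDerivAt (fun y : ℝ => 1 - y ^ b) (-(b * x ^ (b - 1))) x := by
    exact (Real.hasDerivAt_rpow_const (p := b) (Or.inl hx.ne')).const_sub 1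
  have h3 : HasDerivAt (fun y : ℝ => 1 - y ^ c) (-(c * x ^ (c - 1))) x := by
    exact (Real.hasDerivAt_rpow_const (p := c) (Or.inl hx.ne')).const_sub 1
  have h2' : HasDerivAt (fun y : ℝ => Real.log (1 - y ^ b))
      (-(b * x ^ (b - 1)) / (1 - x ^ b)) x := h2.log (sub_pos.mpr hxb1).ne'
  have h3' : HasDerivAt (fun y : ℝ => Real.log (1 - y ^ c))
      (-(c * x ^ (c - 1)) / (1 - x ^ c)) x := h3.log (sub_pos.mpr hxc1).ne'
  exact (h1.add h2').sub h3'

lemma L_deriv_pos {a b c x : ℝ} (ha : 0 ≤ a) (hb : 0 < b) (hc : 0 < c) (habc : c < a + b)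
    (hx : 0 < x) (hx1 : x < 1) :
    0 < a * x⁻¹ + -(b * x ^ (b - 1)) / (1 - x ^ b) - -(c * x ^ (c - 1)) / (1 - x ^ c) := by
  have hxb1 : x ^ b < 1 := Real.rpow_lt_one hx.le hx1 hb
  have hxc1 : x ^ c < 1 := Real.rpow_lt_one hx.le hx1 hc
  have hxb0 : 0 < x ^ b := Real.rpow_pos_of_pos hx b
  have hxc0 : 0 < x ^ c := Real.rpow_pos_of_pos hx c
  have eb : x ^ (b - 1) = x ^ b / x := by
    rw [Real.rpow_sub hx, Real.rpow_one]
  have ec : x ^ (c - 1) = x ^ c / x := by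
    rw [Real.rpow_sub hx, Real.rpow_one]
  have hP : 0 < 1 - x ^ b := sub_pos.mpr hxb1
  have hQ : 0 < 1 - x ^ c := sub_pos.mpr hxc1
  have key := key_ineq ha hb hc habc hx hx1
  have eq1 : a * x⁻¹ + -(b * x ^ (b - 1)) / (1 - x ^ b) - -(c * x ^ (c - 1)) / (1 - x ^ c)
      = (a * (1 - x ^ b) * (1 - x ^ c) + c * x ^ c * (1 - x ^ b) - b * x ^ b * (1 - x ^ c))
        / (x * ((1 - x ^ b) * (1 - x ^ c))) := by
    rw [eb, ec]
    field_simp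
    ring
  rw [eq1]
  apply div_pos (by linarith) (by positivity)

lemma L_strictMono {a b c : ℝ} (ha : 0 ≤ a) (hb : 0 < b) (hc : 0 < c) (habc : c < a + b) :
    StrictMonoOn (fun y : ℝ => a * Real.log y + Real.log (1 - y ^ b) - Real.log (1 - y ^ c))
      (Ioo (0 : ℝ) 1) := by
  apply strictMonoOn_of_deriv_pos (convex_Ioo 0 1)
  · intro x hx
    exact (L_hasDerivAt a b c hb hc hx.1 hx.2).differentiableAt.continuousAt.continuousWithinAt
  · intro x hx
    rw [interior_Ioo] at hx
    rw [(L_hasDerivAt a b c hb hc hx.1 hx.2).deriv]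
    exact L_deriv_pos ha hb hc habc hx.1 hx.2

lemma bound_aux {a b c : ℝ} (ha : 0 ≤ a) (hb : 0 < b) (hc : 0 < c) (habc : c < a + b)
    {x : ℝ} (hx : 0 < x) (hx1 : x < 1) :
    x ^ a * (1 - x ^ b) / (1 - x ^ c) ≤ b / c := by
  set D : ℝ → ℝ := fun y => b - b * y ^ c - c * y ^ a + c * y ^ (a + b) with hD_def
  have hDderiv : ∀ y : ℝ, 0 < y → HasDerivAt D
      (0 - b * (c * y ^ (c - 1)) - c * (a * y ^ (a - 1)) + c * ((a + b) * y ^ (a + b - 1))) y := by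
    intro y hy
    have t1 := (Real.hasDerivAt_rpow_const (x := y) (p := c) (Or.inl hy.ne')).const_mul b
    have t2 := (Real.hasDerivAt_rpow_const (x := y) (p := a) (Or.inl hy.ne')).const_mul c
    have t3 := (Real.hasDerivAt_rpow_const (x := y) (p := a + b) (Or.inl hy.ne')).const_mul c
    exact (((hasDerivAt_const y b).sub t1).sub t2).add t3
  have hanti : StrictAntiOn D (Ioc (0 : ℝ) 1) := by
    apply strictAntiOn_of_deriv_neg (convex_Ioc 0 1)
    · intro y hy
      have t1 := Real.continuousAt_rpow_const y c (Or.inl hy.1.ne')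
      have t2 := Real.continuousAt_rpow_const y a (Or.inl hy.1.ne')
      have t3 := Real.continuousAt_rpow_const y (a + b) (Or.inl hy.1.ne')
      exact (((continuousAt_const.sub (continuousAt_const.mul t1)).sub
        (continuousAt_const.mul t2)).add (continuousAt_const.mul t3)).continuousWithinAt
    · intro y hy
      rw [interior_Ioc] at hy
      rw [(hDderiv y hy.1).deriv]
      have k1 : y ^ (a + b - 1) < y ^ (c - 1) :=
        Real.rpow_lt_rpow_of_exponent_gt hy.1 hy.2 (by linarith)
      have k2 : y ^ (a + b - 1) ≤ y ^ (a - 1) :=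
        Real.rpow_le_rpow_of_exponent_ge hy.1 hy.2.le (by linarith)
      nlinarith [mul_lt_mul_of_pos_left k1 (mul_pos hc hb),
        mul_le_mul_of_nonneg_left k2 (mul_nonneg hc.le ha)]
  have hD1 : D 1 = 0 := by simp [hD_def, Real.one_rpow]
  have hDx : 0 < D x := by
    have := hanti ⟨hx, hx1.le⟩ ⟨zero_lt_one, le_refl 1⟩ hx1
    rw [hD1] at this
    exact this
  have hQ : 0 < 1 - x ^ c := sub_pos.mpr (Real.rpow_lt_one hx.le hx1 hc)
  rw [div_le_div_iff₀ hQ hc]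
  have e : x ^ (a + b) = x ^ a * x ^ b := Real.rpow_add hx a b
  have hDx' : 0 < b - b * x ^ c - c * x ^ a + c * x ^ (a + b) := hDx
  nlinarith [hDx', e]

theorem ratio_lemma_increasing (p₁ q₁ p₂ q₂ : ℝ)
    (hp₁ : 0 ≤ p₁) (hq₁ : p₁ < q₁) (hp₂ : 0 ≤ p₂) (hq₂ : p₂ < q₂)
    (h12 : p₂ ≤ p₁) (hqq : q₂ < q₁)
    (h : ℝ → ℝ) (hh : ∀ x ∈ Ioo (0:ℝ) 1, h x = (x ^ p₁ - x ^ q₁) / (x ^ p₂ - x ^ q₂)) :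
    StrictMonoOn h (Ioo (0:ℝ) 1) ∧
      ∀ x ∈ Ioo (0:ℝ) 1, h x ≤ (q₁ - p₁) / (q₂ - p₂) := by
  set a := p₁ - p₂ with ha_def
  set b := q₁ - p₁ with hb_def
  set c := q₂ - p₂ with hc_def
  have ha : 0 ≤ a := by rw [ha_def]; linarith
  have hb : 0 < b := by rw [hb_def]; linarith
  have hc : 0 < c := by rw [hc_def]; linarith
  have habc : c < a + b := by rw [ha_def, hb_def, hc_def]; linarith
  have hG : ∀ x ∈ Ioo (0 : ℝ) 1, h x = x ^ a * (1 - x ^ b) / (1 - x ^ c) := by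
    intro x hx
    obtain ⟨hx0, hx1⟩ := hx
    rw [hh x ⟨hx0, hx1⟩]
    have hp2 : (0 : ℝ) < x ^ p₂ := Real.rpow_pos_of_pos hx0 p₂
    have e1 : x ^ p₁ = x ^ p₂ * x ^ a := by
      rw [← Real.rpow_add hx0]; congr 1; rw [ha_def]; ring
    have e2 : x ^ q₁ = x ^ p₂ * (x ^ a * x ^ b) := by
      rw [← Real.rpow_add hx0, ← Real.rpow_add hx0]; congr 1
      rw [ha_def, hb_def]; ring
    have e3 : x ^ q₂ = x ^ p₂ * x ^ c := by
      rw [← Real.rpow_add hx0]; congr 1; rw [hc_def]; ring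
    rw [e1, e2, e3,
      show x ^ p₂ * x ^ a - x ^ p₂ * (x ^ a * x ^ b) = x ^ p₂ * (x ^ a * (1 - x ^ b)) by ring,
      show x ^ p₂ - x ^ p₂ * x ^ c = x ^ p₂ * (1 - x ^ c) by ring,
      mul_div_mul_left _ _ hp2.ne']
  constructor
  · intro x hx y hy hxy
    rw [hG x hx, hG y hy]
    have hL := L_strictMono ha hb hc habc hx hy hxy
    have ex : ∀ z ∈ Ioo (0 : ℝ) 1,
        Real.exp (a * Real.log z + Real.log (1 - z ^ b) - Real.log (1 - z ^ c))
          = z ^ a * (1 - z ^ b) / (1 - z ^ c) := by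
      intro z hz
      have hzb : (0 : ℝ) < 1 - z ^ b := sub_pos.mpr (Real.rpow_lt_one hz.1.le hz.2 hb)
      have hzc : (0 : ℝ) < 1 - z ^ c := sub_pos.mpr (Real.rpow_lt_one hz.1.le hz.2 hc)
      have hza : 0 < z ^ a := Real.rpow_pos_of_pos hz.1 a
      rw [← Real.log_rpow hz.1, Real.exp_sub, Real.exp_add, Real.exp_log hza,
        Real.exp_log hzb, Real.exp_log hzc]
    rw [← ex x hx, ← ex y hy]
    exact Real.exp_lt_exp.mpr hL
  · intro x hx
    rw [hG x hx]
    exact bound_aux ha hb hc habc hx.1 hx.2
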